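/- Consider the instance with three agents N = {1,2,3}, two indivisible goods M = {a,b}, and one divisible good C = [0,1) with linear valuations, where u_1(a) = 0.37, u_1(b) = 0, u_2(a) = 0, u_2(b) = 0.7, u_3(a) = 0, u_3(b) = 1, and for every piece S ⊆ [0,1): u_1(S) = 0.63·μ(S), u_2(S) = 0.3·μ(S), u_3(S) = 0 (μ denoting Lebesgue measure). In this instance, no leximin allocation is envy-free up to one good for mixed goods (EF1M). -/

import Mathlib

open MeasureTheory

/-- An allocation of `m` indivisible goods and of the cake `[0,1)` among `n` agents:
the indivisible goods are partitioned into the bundles `ind i`, and the cake `[0,1)`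
is partitioned into the measurable (Borel) pieces `piece i`. -/
structure Alloc (n m : ℕ) where
  ind : Fin n → Finset (Fin m)
  piece : Fin n → Set ℝ
  ind_partition : ∀ g : Fin m, ∃! i : Fin n, g ∈ ind i
  piece_measurable : ∀ i, MeasurableSet (piece i)
  piece_disjoint : ∀ i j : Fin n, i ≠ j → piece i ∩ piece j = ∅
  piece_cover : (⋃ i, piece i) = Set.Ico (0 : ℝ) 1

/-- Values for the two indivisible goods `a, b`: `u_1(a) = 0.37`, `u_1(b) = 0`,
`u_2(a) = 0`, `u_2(b) = 0.7`, `u_3(a) = 0`, `u_3(b) = 1`. -/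
noncomputable def vM (i : Fin 3) (g : Fin 2) : ℝ :=
  if i = 0 then (if g = 0 then 0.37 else 0)
  else if i = 1 then (if g = 0 then 0 else 0.7)
  else (if g = 0 then 0 else 1)

/-- Linear values for pieces `S ⊆ [0,1)` of the divisible good:
`u_1(S) = 0.63·μ(S)`, `u_2(S) = 0.3·μ(S)`, `u_3(S) = 0`, `μ` Lebesgue measure. -/
noncomputable def dval (i : Fin 3) (S : Set ℝ) : ℝ :=
  (if i = 0 then 0.63 else if i = 1 then 0.3 else 0) * (volume S).toReal

/-- Value of agent `i` for agent `j`'s bundle `A_j = M_j ∪ C_j`. -/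
noncomputable def valOn (A : Alloc 3 2) (i j : Fin 3) : ℝ :=
  (∑ g ∈ A.ind j, vM i g) + dval i (A.piece j)

/-- Utility of agent `i` in allocation `A`. -/
noncomputable def util (A : Alloc 3 2) (i : Fin 3) : ℝ := valOn A i i

/-- Value of agent `i` for agent `j`'s bundle with indivisible good `g` removed. -/
noncomputable def valOnErase (A : Alloc 3 2) (i j : Fin 3) (g : Fin 2) : ℝ :=
  (∑ g' ∈ A.ind j \ {g}, vM i g') + dval i (A.piece j)

/-- Lexicographic comparison of vectors: `x ≤ y` lexicographically. -/
def lexLE (x y : Fin 3 → ℝ) : Prop :=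
  x = y ∨ ∃ k : Fin 3, x k < y k ∧ ∀ k' : Fin 3, k' < k → x k' = y k'

/-- The vector `x` sorted in non-decreasing order. -/
noncomputable def sortedVec (x : Fin 3 → ℝ) : Fin 3 → ℝ := x ∘ Tuple.sort x

/-- A leximin allocation lexicographically maximizes the agents' utility vector
sorted in non-decreasing order. -/
def Leximin (A : Alloc 3 2) : Prop :=
  ∀ A' : Alloc 3 2, lexLE (sortedVec (util A')) (sortedVec (util A))

/-- Envy-freeness up to one good for mixed goods (EF1M). -/
def EF1M (A : Alloc 3 2) : Prop :=
  ∀ i j : Fin 3,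
    (A.ind j = ∅ → valOn A i j ≤ util A i) ∧
    (A.ind j ≠ ∅ → ∃ g ∈ A.ind j, valOnErase A i j g ≤ util A i)

/- ### auxiliary lemmas -/

lemma dval_zero (S : Set ℝ) : dval 0 S = 0.63 * (volume S).toReal := by norm_num [dval]
lemma dval_one (S : Set ℝ) : dval 1 S = 0.3 * (volume S).toReal := by norm_num [dval]
lemma dval_two (S : Set ℝ) : dval 2 S = 0 := by simp [dval]

lemma sorted_le (x : Fin 3 → ℝ) (i : Fin 3) : sortedVec x 0 ≤ x i := by
  have h := Tuple.monotone_sort x (Fin.zero_le ((Tuple.sort x).symm i))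
  simpa [sortedVec, Function.comp] using h

lemma ind_unique (A : Alloc 3 2) {g : Fin 2} {i j : Fin 3}
    (hi : g ∈ A.ind i) (hj : g ∈ A.ind j) : i = j :=
  ((A.ind_partition g).unique hi hj)

lemma piece_subset (A : Alloc 3 2) (i : Fin 3) : A.piece i ⊆ Set.Ico (0:ℝ) 1 := by
  rw [← A.piece_cover]; exact Set.subset_iUnion _ i

lemma vol_piece_le (A : Alloc 3 2) (i : Fin 3) : (volume (A.piece i)).toReal ≤ 1 := by
  have h : volume (A.piece i) ≤ volume (Set.Ico (0:ℝ) 1) := measure_mono (piece_subset A i)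
  have h1 : volume (Set.Ico (0:ℝ) 1) = 1 := by simp [Real.volume_Ico]
  rw [h1] at h
  have := ENNReal.toReal_mono (by simp) h
  simpa using this

lemma exists_util_le (A : Alloc 3 2) : ∃ i, util A i ≤ 0.3 := by
  by_cases hb : (1 : Fin 2) ∈ A.ind 2
  · refine ⟨1, ?_⟩
    have hsum : (∑ g ∈ A.ind 1, vM 1 g) = 0 := by
      refine Finset.sum_eq_zero fun g hg => ?_
      have hg1 : g ≠ 1 := fun h => by
        subst h; exact absurd (ind_unique A hg hb) (by decide)
      have hg0 : g = 0 := by omega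
      subst hg0; simp [vM]
    have hle := vol_piece_le A 1
    have hnn : (0:ℝ) ≤ (volume (A.piece 1)).toReal := ENNReal.toReal_nonneg
    simp only [util, valOn, hsum, dval_one]
    linarith
  · refine ⟨2, ?_⟩
    have hsum : (∑ g ∈ A.ind 2, vM 2 g) = 0 := by
      refine Finset.sum_eq_zero fun g hg => ?_
      have hg1 : g ≠ 1 := fun h => hb (h ▸ hg)
      have hg0 : g = 0 := by omega
      subst hg0; simp [vM]
    simp only [util, valOn, hsum, dval_two]
    norm_num

noncomputable def Astar : Alloc 3 2 where
  ind := ![{0}, ∅, {1}]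
  piece := ![∅, Set.Ico 0 1, ∅]
  ind_partition := by
    intro g
    fin_cases g
    · exact ⟨0, by simp, fun j hj => by fin_cases j <;> simp_all⟩
    · exact ⟨2, by simp, fun j hj => by fin_cases j <;> simp_all⟩
  piece_measurable := by
    intro i; fin_cases i <;> simp [measurableSet_Ico]
  piece_disjoint := by
    intro i j hij; fin_cases i <;> fin_cases j <;> simp_all
  piece_cover := by
    ext x
    constructor
    · rintro ⟨S, ⟨i, rfl⟩, hx⟩
      fin_cases i <;> simp_all
    · intro hx
      exact Set.mem_iUnion.mpr ⟨1, hx⟩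

lemma util_Astar : util Astar 0 = 0.37 ∧ util Astar 1 = 0.3 ∧ util Astar 2 = 1 := by
  refine ⟨?_, ?_, ?_⟩ <;>
    simp [util, valOn, dval_zero, dval_one, dval_two, vM, Astar, Real.volume_Ico]


/-- in this instance (three agents, two indivisible goods `a, b` with
`u_1(a) = 0.37`, `u_2(b) = 0.7`, `u_3(b) = 1`, and the divisible good `[0,1)` with
linear values `0.63·μ(S)`, `0.3·μ(S)`, `0`), no leximin allocation is EF1M. -/
theorem no_leximin_allocation_is_EF1M :
    ∀ A : Alloc 3 2, Leximin A → ¬ EF1M A := by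
  intro A hlex hef
  obtain ⟨i0, hi0⟩ := exists_util_le A
  have hAle : sortedVec (util A) 0 ≤ 0.3 := (sorted_le _ i0).trans hi0
  obtain ⟨h0, h1, h2⟩ := util_Astar
  have hstar : sortedVec (util Astar) 0 = 0.3 := by
    have hle : sortedVec (util Astar) 0 ≤ 0.3 := h1 ▸ sorted_le (util Astar) 1
    have hge : (0.3:ℝ) ≤ sortedVec (util Astar) 0 := by
      obtain ⟨j, hj⟩ : ∃ j, sortedVec (util Astar) 0 = util Astar j := ⟨_, rfl⟩
      rw [hj]
      fin_cases j
      · show (0.3:ℝ) ≤ util Astar 0; rw [h0]; norm_num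
      · show (0.3:ℝ) ≤ util Astar 1; rw [h1]
      · show (0.3:ℝ) ≤ util Astar 2; rw [h2]; norm_num
    linarith
  have hA0 : sortedVec (util A) 0 = 0.3 := by
    rcases hlex Astar with heq | ⟨k, hk, hpre⟩
    · rw [← heq, hstar]
    · rcases eq_or_ne k 0 with rfl | hk0
      · rw [hstar] at hk; linarith
      · have := hpre 0 (Fin.pos_of_ne_zero hk0)
        rw [← this, hstar]
  have hmin : ∀ i, (0.3 : ℝ) ≤ util A i := fun i => hA0 ▸ sorted_le (util A) i
  -- agent 3 (index 2) must hold good b (index 1)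
  have hb : (1 : Fin 2) ∈ A.ind 2 := by
    by_contra hb
    have hsum : (∑ g ∈ A.ind 2, vM 2 g) = 0 := by
      refine Finset.sum_eq_zero fun g hg => ?_
      have hg1 : g ≠ 1 := fun h => hb (h ▸ hg)
      have hg0 : g = 0 := by omega
      subst hg0; simp [vM]
    have := hmin 2
    simp only [util, valOn, hsum, dval_two] at this
    norm_num at this
  -- agent 2 (index 1) has measure-1 piece
  have hμ1 : (volume (A.piece 1)).toReal = 1 := by
    have hsum : (∑ g ∈ A.ind 1, vM 1 g) = 0 := by
      refine Finset.sum_eq_zero fun g hg => ?_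
      have hg1 : g ≠ 1 := fun h => by
        subst h; exact absurd (ind_unique A hg hb) (by decide)
      have hg0 : g = 0 := by omega
      subst hg0; simp [vM]
    have h := hmin 1
    simp only [util, valOn, hsum, dval_one] at h
    have hle := vol_piece_le A 1
    linarith
  have hμ1' : volume (A.piece 1) = 1 := by
    exact (ENNReal.toReal_eq_one_iff _).mp hμ1
  -- hence agent 1's piece is null
  have hμ0 : (volume (A.piece 0)).toReal = 0 := by
    have hsub : A.piece 0 ⊆ Set.Ico (0:ℝ) 1 \ A.piece 1 := by
      intro x hx
      refine ⟨piece_subset A 0 hx, fun hx1 => ?_⟩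
      have := A.piece_disjoint 0 1 (by decide)
      exact absurd (Set.mem_inter hx hx1) (by rw [this]; exact id)
    have hdiff : volume (Set.Ico (0:ℝ) 1 \ A.piece 1) = 0 := by
      rw [measure_diff (piece_subset A 1) (A.piece_measurable 1).nullMeasurableSet
        (by rw [hμ1']; simp), hμ1']
      simp [Real.volume_Ico]
    have : volume (A.piece 0) = 0 :=
      le_antisymm (hdiff ▸ measure_mono hsub) zero_le
    simp [this]
  -- agent 1 (index 0) must hold good a (index 0)
  have ha : (0 : Fin 2) ∈ A.ind 0 := by
    by_contra ha
    have hsum : (∑ g ∈ A.ind 0, vM 0 g) = 0 := by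
      refine Finset.sum_eq_zero fun g hg => ?_
      have hg0 : g ≠ 0 := fun h => ha (h ▸ hg)
      have hg1 : g = 1 := by omega
      subst hg1; simp [vM]
    have h := hmin 0
    simp only [util, valOn, hsum, dval_zero, hμ0] at h
    norm_num at h
  -- agent 2 (index 1) gets no indivisible good
  have hempty : A.ind 1 = ∅ := by
    rw [Finset.eq_empty_iff_forall_notMem]
    intro g hg
    fin_cases g
    · exact absurd (ind_unique A hg ha) (by decide)
    · exact absurd (ind_unique A hg hb) (by decide)
  -- EF1M violated: agent 1 (index 0) envies agent 2 (index 1)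
  have henvy := (hef 0 1).1 hempty
  have hval : valOn A 0 1 = 0.63 := by
    simp [valOn, hempty, dval_zero, hμ1]
  have hsumle : (∑ g ∈ A.ind 0, vM 0 g) ≤ 0.37 := by
    have h1 : (∑ g ∈ A.ind 0, vM 0 g) ≤ ∑ g : Fin 2, vM 0 g := by
      refine Finset.sum_le_sum_of_subset_of_nonneg (Finset.subset_univ _) fun g _ _ => ?_
      fin_cases g <;> norm_num [vM]
    have h2 : (∑ g : Fin 2, vM 0 g) = 0.37 := by
      simp [Fin.sum_univ_two, vM]
    linarith
  have hutil : util A 0 ≤ 0.37 := by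
    simp only [util, valOn, dval_zero, hμ0]
    linarith
  rw [hval] at henvy
  linarith
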